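/- Let I be an index set and (L_i)_{i∈I} a family of Markov generators with state spaces (X_i)_{i∈I} whose off-diagonal transition rates take values in {0,1} (i.e. the underlying graphs are unweighted). Suppose there exist sequences (i_m)_{m∈ℕ} ⊂ I and (x_m)_{m∈ℕ} with x_m ∈ X_{i_m} such that M₁^{(i_m)}(x_m) → ∞ as m → ∞, where M₁^{(i)}(x) denotes the quantity M₁ for L_i. Then there exists no n ∈ [1,∞) such that L_i satisfies CD_Υ(0,n) for all i ∈ I. In particular, if the underlying graph of a single Markov generator L is unweighted with unbounded vertex degree (sup_x M₁(x) = ∞), then L satisfies CD_Υ(0,n) for no n ∈ [1,∞). -/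
import Mathlib


open Real Filter MeasureTheory Set

/-- `Υ(r) = e^r - r - 1`. -/
noncomputable def Ups (r : ℝ) : ℝ := Real.exp r - r - 1

/-- `M₁(x) = ∑_{y ≠ x} k(x,y)`. -/
noncomputable def M1fn {X : Type*} (k : X → X → ℝ) (x : X) : ℝ :=
  ∑' y : {y : X // y ≠ x}, k x y

/-- The Markov generator `L f(x) = ∑_y k(x,y)(f(y) - f(x))`. -/
noncomputable def genOp {X : Type*} (k : X → X → ℝ) (f : X → ℝ) (x : X) : ℝ :=
  ∑' y, k x y * (f y - f x)

/-- `Ψ_Υ(f)(x) = ∑_y k(x,y) Υ(f(y) - f(x))`. -/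
noncomputable def psiUps {X : Type*} (k : X → X → ℝ) (f : X → ℝ) (x : X) : ℝ :=
  ∑' y, k x y * Ups (f y - f x)

/-- `B_{Υ'}(f,g)(x) = ∑_y k(x,y) Υ'(f(y)-f(x)) (g(y)-g(x))`. -/
noncomputable def bUps {X : Type*} (k : X → X → ℝ) (f g : X → ℝ) (x : X) : ℝ :=
  ∑' y, k x y * (Real.exp (f y - f x) - 1) * (g y - g x)

/-- `Ψ_{2,Υ}(f) = (1/2)(L Ψ_Υ(f) - B_{Υ'}(f, L f))`. -/
noncomputable def psi2Ups {X : Type*} (k : X → X → ℝ) (f : X → ℝ) (x : X) : ℝ :=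
  (1/2) * (genOp k (psiUps k f) x - bUps k f (genOp k f) x)

/-- Boundedness of a real-valued function on the state space. -/
def BddFun {X : Type*} (f : X → ℝ) : Prop := ∃ B : ℝ, ∀ x, |f x| ≤ B

/-- The standing assumptions on the transition rates: nonnegative off-diagonal rates,
`M₁(x) < ∞` (summability), `k(x,x) = -M₁(x)`, and `M₂(x) < ∞`. -/
def KernelSetting {X : Type*} (k : X → X → ℝ) : Prop :=
  (∀ x y, x ≠ y → 0 ≤ k x y) ∧
  (∀ x : X, Summable fun y : {y : X // y ≠ x} => k x y) ∧
  (∀ x : X, k x x = -M1fn k x) ∧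
  (∀ x : X, Summable fun y : {y : X // y ≠ x} => k x y * M1fn k y)

/-- A CD-function: continuous and nonnegative on `[0,∞)` with `F(0) = 0`, `F(r)/r`
strictly increasing on `(0,∞)` and `1/F` integrable at `∞`. -/
def IsCDFunction (F : ℝ → ℝ) : Prop :=
  ContinuousOn F (Ici 0) ∧ F 0 = 0 ∧ (∀ r : ℝ, 0 ≤ r → 0 ≤ F r) ∧
  StrictMonoOn (fun r => F r / r) (Ioi 0) ∧
  ∃ c : ℝ, 0 < c ∧ IntegrableOn (fun r => 1 / F r) (Ioi c)

/-- The trivial extension `F₀` of `F : [0,∞) → [0,∞)` by `0` on `(-∞,0)`. -/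
noncomputable def trivExt (F : ℝ → ℝ) : ℝ → ℝ := fun r => if 0 ≤ r then F r else 0

/-- The condition `CD_Υ(κ,F)` at a point `x`. -/
def CDUpsAt {X : Type*} (k : X → X → ℝ) (κ : ℝ) (F : ℝ → ℝ) (x : X) : Prop :=
  ∀ f : X → ℝ, BddFun f →
    κ * psiUps k f x + trivExt F (-genOp k f x) ≤ psi2Ups k f x

/-- The condition `CD_Υ(κ,F)` (at every point). -/
def CDUps {X : Type*} (k : X → X → ℝ) (κ : ℝ) (F : ℝ → ℝ) : Prop :=
  ∀ x : X, CDUpsAt k κ F x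

universe u v

lemma tsum_ne_eq {X : Type*} (x : X) (g : X → ℝ) (hg : g x = 0) :
    ∑' y, g y = ∑' y : {y : X // y ≠ x}, g y := by
  refine (tsum_subtype_eq_of_support_subset (s := {y | y ≠ x}) ?_).symm
  intro y hy
  simp only [Function.mem_support] at hy
  exact fun h => hy (h ▸ hg)

lemma Ups_zero : Ups 0 = 0 := by simp [Ups]

lemma key_lemma {X : Type*} (k : X → X → ℝ) (hks : KernelSetting k)
    (h01 : ∀ x y : X, x ≠ y → k x y = 0 ∨ k x y = 1)
    {n : ℝ} (hn : 1 ≤ n) (hCD : CDUps k 0 (fun r => r ^ 2 / n)) (x : X) :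
    M1fn k x ≤ Real.exp (Real.sqrt n) := by
  classical
  obtain ⟨hknn, hsum, hdiag, hsum2⟩ := hks
  set t : ℝ := Real.sqrt n with htdef
  have htn : t ^ 2 = n := Real.sq_sqrt (by linarith)
  have ht0 : 0 ≤ t := Real.sqrt_nonneg n
  have ht1 : 1 ≤ t := by nlinarith
  set f : X → ℝ := fun y => if y = x then t else 0 with hfdef
  have hfx : f x = t := if_pos rfl
  have hfy : ∀ y : X, y ≠ x → f y = 0 := fun y hy => if_neg hy
  set d : ℝ := M1fn k x with hddef
  have hd0 : 0 ≤ d := tsum_nonneg fun y => hknn x y.1 (Ne.symm y.2)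
  -- k y x bounds for y ≠ x
  have hkyx0 : ∀ y : X, y ≠ x → 0 ≤ k y x := fun y hy => hknn y x hy
  have hkyx1 : ∀ y : X, y ≠ x → k y x ≤ 1 := by
    intro y hy; rcases h01 y x hy with h | h <;> rw [h] <;> norm_num
  -- summability of s
  have hs_summ : Summable (fun y : {y : X // y ≠ x} => k x y.1 * k y.1 x) := by
    refine Summable.of_nonneg_of_le (fun y => mul_nonneg (hknn x y.1 (Ne.symm y.2)) (hkyx0 y.1 y.2))
      (fun y => ?_) (hsum x)
    exact mul_le_of_le_one_right (hknn x y.1 (Ne.symm y.2)) (hkyx1 y.1 y.2)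
  set s : ℝ := ∑' y : {y : X // y ≠ x}, k x y.1 * k y.1 x with hsdef
  have hs0 : 0 ≤ s := tsum_nonneg fun y => mul_nonneg (hknn x y.1 (Ne.symm y.2)) (hkyx0 y.1 y.2)
  have hsd : s ≤ d := by
    refine Summable.tsum_le_tsum (fun y => ?_) hs_summ (hsum x)
    exact mul_le_of_le_one_right (hknn x y.1 (Ne.symm y.2)) (hkyx1 y.1 y.2)
  -- computation 1: L f x
  have h1 : genOp k f x = d * (-t) := by
    rw [genOp, tsum_ne_eq x _ (by simp)]
    have : ∀ y : {y : X // y ≠ x}, k x y.1 * (f y.1 - f x) = k x y.1 * (-t) := by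
      intro y; rw [hfy y.1 y.2, hfx]; ring
    rw [tsum_congr this, tsum_mul_right]
    rfl
  -- computation 2: L f y for y ≠ x
  have h2 : ∀ y : X, y ≠ x → genOp k f y = k y x * t := by
    intro y hy
    rw [genOp, tsum_eq_single x ?_, hfx, hfy y hy, sub_zero]
    intro z hz
    by_cases hzy : z = y
    · subst hzy; simp
    · rw [hfy z hz, hfy y hy]; ring
  -- computation 3: psiUps f x
  have h3 : psiUps k f x = d * Ups (-t) := by
    rw [psiUps, tsum_ne_eq x _ (by simp [Ups_zero])]
    have : ∀ y : {y : X // y ≠ x}, k x y.1 * Ups (f y.1 - f x) = k x y.1 * Ups (-t) := by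
      intro y; rw [hfy y.1 y.2, hfx, zero_sub]
    rw [tsum_congr this, tsum_mul_right]
    rfl
  -- computation 4: psiUps f y for y ≠ x
  have h4 : ∀ y : X, y ≠ x → psiUps k f y = k y x * Ups t := by
    intro y hy
    rw [psiUps, tsum_eq_single x ?_, hfx, hfy y hy, sub_zero]
    intro z hz
    by_cases hzy : z = y
    · subst hzy; simp [Ups_zero]
    · rw [hfy z hz, hfy y hy, sub_zero, Ups_zero, mul_zero]
  -- computation 5: L psiUps f x
  have h5 : genOp k (psiUps k f) x = s * Ups t - d * (d * Ups (-t)) := by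
    rw [genOp, tsum_ne_eq x _ (by simp)]
    have : ∀ y : {y : X // y ≠ x},
        k x y.1 * (psiUps k f y.1 - psiUps k f x)
        = k x y.1 * k y.1 x * Ups t - k x y.1 * (d * Ups (-t)) := by
      intro y; rw [h4 y.1 y.2, h3]; ring
    rw [tsum_congr this, Summable.tsum_sub (hs_summ.mul_right _) ((hsum x).mul_right _),
      tsum_mul_right, tsum_mul_right]
    rfl
  -- computation 6: bUps
  have h6 : bUps k f (genOp k f) x
      = s * ((Real.exp (-t) - 1) * t) + d * ((Real.exp (-t) - 1) * (d * t)) := by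
    rw [bUps, tsum_ne_eq x _ (by simp)]
    have : ∀ y : {y : X // y ≠ x},
        k x y.1 * (Real.exp (f y.1 - f x) - 1) * (genOp k f y.1 - genOp k f x)
        = k x y.1 * k y.1 x * ((Real.exp (-t) - 1) * t)
          + k x y.1 * ((Real.exp (-t) - 1) * (d * t)) := by
      intro y; rw [h2 y.1 y.2, h1, hfy y.1 y.2, hfx, zero_sub]; ring
    rw [tsum_congr this, Summable.tsum_add (hs_summ.mul_right _) ((hsum x).mul_right _),
      tsum_mul_right, tsum_mul_right]
    rfl
  -- apply CD
  have hbdd : BddFun f := by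
    refine ⟨|t|, fun y => ?_⟩
    by_cases hy : y = x
    · subst hy; rw [hfx]
    · rw [hfy y hy]; simp
  have hCDx := hCD x f hbdd
  rw [zero_mul, zero_add, h1, psi2Ups, h5, h6] at hCDx
  have hneg : -(d * -t) = t * d := by ring
  rw [hneg, trivExt, if_pos (mul_nonneg ht0 hd0)] at hCDx
  have hLHS : (t * d) ^ 2 / n = d ^ 2 := by
    rw [mul_pow, htn, mul_div_cancel_left₀ _ (by linarith : n ≠ 0)]
  rw [hLHS] at hCDx
  -- now finish with real analysis
  set E : ℝ := Real.exp t with hE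
  set e2 : ℝ := Real.exp (-t) with he2
  have hEe2 : E * e2 = 1 := by rw [hE, he2, ← Real.exp_add]; simp
  have he2pos : 0 < e2 := Real.exp_pos _
  have he2le : e2 ≤ 1 := by
    have := Real.exp_le_exp.2 (by linarith : -t ≤ 0)
    rwa [Real.exp_zero] at this
  have hE1 : 1 + t ≤ E := by
    have := Real.add_one_le_exp t; linarith
  simp only [Ups] at hCDx
  rw [← hE, ← he2] at hCDx
  clear_value t d s E e2
  clear hCD hsum hsum2 hdiag hknn h01 hfdef hfy hfx hbdd hneg hLHS
  have hte2 : 0 ≤ t * e2 := mul_nonneg ht0 he2pos.le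
  have hte2' : t * e2 ≤ t := mul_le_of_le_one_right ht0 he2le
  have hmain : d ^ 2 ≤ 1 / 2 * (s * (E - 1 - t * e2) + d ^ 2 * (1 - e2 - t * e2)) :=
    le_trans hCDx (le_of_eq (by ring))
  have hA0 : 0 ≤ E - 1 - t * e2 := by linarith
  have hAE : E - 1 - t * e2 ≤ E := by linarith
  have hsa : s * (E - 1 - t * e2) ≤ d * E :=
    le_trans (mul_le_mul_of_nonneg_right hsd hA0) (mul_le_mul_of_nonneg_left hAE hd0)
  have hB : d ^ 2 * (1 - e2 - t * e2) ≤ d ^ 2 :=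
    mul_le_of_le_one_right (sq_nonneg d) (by linarith)
  have hfin : d ^ 2 ≤ d * E := by linarith
  rcases eq_or_lt_of_le hd0 with h | h
  · rw [← h]; linarith
  · rw [pow_two] at hfin
    exact le_of_mul_le_mul_left hfin h


/-- Corollary 2.13: for a family of Markov generators on unweighted graphs along which
`M₁` blows up, no uniform `CD_Υ(0,n)` condition can hold; in particular a single
generator whose unweighted underlying graph has unbounded vertex degree satisfies
`CD_Υ(0,n)` for no finite `n`. -/
theorem stmt_10 {I : Type u} (Xf : I → Type v) [∀ i, Countable (Xf i)]
    (k : ∀ i, Xf i → Xf i → ℝ)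
    (hks : ∀ i, KernelSetting (k i))
    (h01 : ∀ (i : I) (x y : Xf i), x ≠ y → k i x y = 0 ∨ k i x y = 1)
    (im : ℕ → I) (xm : ∀ m : ℕ, Xf (im m))
    (hM1 : Tendsto (fun m => M1fn (k (im m)) (xm m)) atTop atTop) :
    (¬ ∃ n : ℝ, 1 ≤ n ∧ ∀ i : I, CDUps (k i) 0 (fun r => r ^ 2 / n))
    ∧ (∀ (Y : Type v) [Countable Y], ∀ kY : Y → Y → ℝ, KernelSetting kY →
        (∀ x y : Y, x ≠ y → kY x y = 0 ∨ kY x y = 1) →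
        ¬ BddAbove (Set.range (M1fn kY)) →
        ¬ ∃ n : ℝ, 1 ≤ n ∧ CDUps kY 0 (fun r => r ^ 2 / n)) := by
  constructor
  · rintro ⟨n, hn, hall⟩
    have hbd : ∀ m : ℕ, M1fn (k (im m)) (xm m) ≤ Real.exp (Real.sqrt n) :=
      fun m => key_lemma (k (im m)) (hks (im m)) (h01 (im m)) hn (hall (im m)) (xm m)
    obtain ⟨m, hm⟩ := (hM1.eventually_gt_atTop (Real.exp (Real.sqrt n))).exists
    exact absurd (hbd m) (not_le.2 hm)
  · intro Y _ kY hksY h01Y hnb ⟨n, hn, hCD⟩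
    refine hnb ⟨Real.exp (Real.sqrt n), ?_⟩
    rintro a ⟨x, rfl⟩
    exact key_lemma kY hksY h01Y hn hCD x
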